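/- Let G be a finite simple graph, let v be a vertex of G, and let H be the graph obtained from G by the star-clique transform at v, that is, H has vertex set V(G) \ {v}, and two distinct vertices u, w are adjacent in H if and only if they are adjacent in G or both u and w are neighbors of v in G. Then there exists a td(G)-ranking of G in which v is the unique vertex with label 1 if and only if td(H) < td(G). -/

import Mathlib

/-- A `k`-ranking of a simple graph `G`: a labeling of the vertices with values from
`{1, …, k}` such that every path joining two distinct vertices with the same label
contains a vertex with a strictly higher label. -/
def IsRanking {V : Type*} (G : SimpleGraph V) (k : ℕ) (f : V → ℕ) : Prop :=
  (∀ v, 1 ≤ f v ∧ f v ≤ k) ∧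
  ∀ ⦃u v : V⦄ (p : G.Walk u v), p.IsPath → u ≠ v → f u = f v →
    ∃ w ∈ p.support, f u < f w

/-- The tree-depth of `G`: the least `k` such that `G` admits a `k`-ranking. -/
noncomputable def treedepth {V : Type*} (G : SimpleGraph V) : ℕ :=
  sInf {k | ∃ f, IsRanking G k f}

/-- The star-clique transform of `G` at `v`: delete `v`, and make two remaining distinct
vertices adjacent iff they were adjacent in `G` or both were neighbors of `v`. -/
def starClique {V : Type*} (G : SimpleGraph V) (v : V) :
    SimpleGraph {w : V // w ≠ v} where
  Adj u w := u ≠ w ∧ (G.Adj u.1 w.1 ∨ (G.Adj v u.1 ∧ G.Adj v w.1))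
  symm := by
    constructor
    rintro u w ⟨hne, h | ⟨h1, h2⟩⟩
    · exact ⟨hne.symm, Or.inl h.symm⟩
    · exact ⟨hne.symm, Or.inr ⟨h2, h1⟩⟩
  loopless := ⟨fun u h => h.1 rfl⟩

lemma ranking_set_nonempty {V : Type*} [Fintype V] (G : SimpleGraph V) :
    {k | ∃ f, IsRanking G k f}.Nonempty := by
  classical
  refine ⟨Fintype.card V, fun x => (Fintype.equivFin V x).1 + 1, fun x => ?_, ?_⟩
  · have := (Fintype.equivFin V x).2; dsimp only; omega
  · intro u w p hp hne heq
    dsimp only at heq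
    exact absurd ((Fintype.equivFin V).injective (Fin.ext (by omega))) hne

lemma lift_walk {V : Type*} (G : SimpleGraph V) (v : V) {u w : {x : V // x ≠ v}}
    (P : (starClique G v).Walk u w) :
    ∃ W : G.Walk u.1 w.1, ∀ x ∈ W.support, x = v ∨ ∃ y ∈ P.support, x = y.1 := by
  induction P with
  | nil => exact ⟨.nil, by simp⟩
  | @cons a b c h P ih =>
    obtain ⟨W, hW⟩ := ih
    obtain ⟨hne, hadj | ⟨h1, h2⟩⟩ := h
    · refine ⟨.cons hadj W, ?_⟩
      intro x hx
      rw [SimpleGraph.Walk.support_cons, List.mem_cons] at hx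
      rcases hx with rfl | hx
      · exact Or.inr ⟨a, by simp, rfl⟩
      · rcases hW x hx with h | ⟨y, hy, rfl⟩
        · exact Or.inl h
        · exact Or.inr ⟨y, List.mem_cons_of_mem _ hy, rfl⟩
    · refine ⟨.cons h1.symm (.cons h2 W), ?_⟩
      intro x hx
      rw [SimpleGraph.Walk.support_cons, SimpleGraph.Walk.support_cons,
        List.mem_cons, List.mem_cons] at hx
      rcases hx with rfl | rfl | hx
      · exact Or.inr ⟨a, by simp, rfl⟩
      · exact Or.inl rfl
      · rcases hW x hx with h | ⟨y, hy, rfl⟩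
        · exact Or.inl h
        · exact Or.inr ⟨y, List.mem_cons_of_mem _ hy, rfl⟩

lemma project_walk {V : Type*} (G : SimpleGraph V) (v : V) :
    ∀ (n : ℕ) {a b : V} (ha : a ≠ v) (hb : b ≠ v) (p : G.Walk a b), p.length ≤ n →
    ∃ q : (starClique G v).Walk ⟨a, ha⟩ ⟨b, hb⟩, ∀ y ∈ q.support, y.1 ∈ p.support := by
  intro n
  induction n with
  | zero =>
    intro a b ha hb p hlen
    cases p with
    | nil => exact ⟨.nil, by simp⟩
    | cons h p' => simp [SimpleGraph.Walk.length_cons] at hlen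
  | succ n ih =>
    intro a b ha hb p hlen
    cases p with
    | nil => exact ⟨.nil, by simp⟩
    | cons h p' =>
      rename_i c
      by_cases hc : c = v
      · cases p' with
        | nil => exact absurd hc hb
        | cons h2 p'' =>
          rename_i d
          have hd : d ≠ v := fun hdv => G.irrefl (by rw [hc, hdv] at h2; exact h2)
          by_cases had : a = d
          · subst had
            obtain ⟨q, hq⟩ := ih ha hb p'' (by
              simp [SimpleGraph.Walk.length_cons] at hlen; omega)
            exact ⟨q, fun y hy => by simp [hq y hy]⟩
          · have e : (starClique G v).Adj ⟨a, ha⟩ ⟨d, hd⟩ :=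
              ⟨fun hh => had (congrArg Subtype.val hh),
                Or.inr ⟨by rw [hc] at h; exact h.symm, by rw [hc] at h2; exact h2⟩⟩
            obtain ⟨q, hq⟩ := ih hd hb p'' (by
              simp [SimpleGraph.Walk.length_cons] at hlen; omega)
            refine ⟨.cons e q, ?_⟩
            intro y hy
            rw [SimpleGraph.Walk.support_cons, List.mem_cons] at hy
            rcases hy with rfl | hy
            · simp
            · simp [hq y hy]
      · have e : (starClique G v).Adj ⟨a, ha⟩ ⟨c, hc⟩ :=
          ⟨fun hh => h.ne (congrArg Subtype.val hh), Or.inl h⟩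
        obtain ⟨q, hq⟩ := ih hc hb p' (by
          simp [SimpleGraph.Walk.length_cons] at hlen; omega)
        refine ⟨.cons e q, ?_⟩
        intro y hy
        rw [SimpleGraph.Walk.support_cons, List.mem_cons] at hy
        rcases hy with rfl | hy
        · simp
        · simp [hq y hy]

/-- `v` is 1-unique in `G` iff the star-clique transform at `v` lowers the tree-depth. -/
theorem oneUnique_iff_starClique_lt {V : Type*} [Fintype V] (G : SimpleGraph V) (v : V) :
    (∃ f : V → ℕ, IsRanking G (treedepth G) f ∧ f v = 1 ∧ ∀ w, f w = 1 → w = v) ↔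
      treedepth (starClique G v) < treedepth G := by
  classical
  constructor
  · rintro ⟨f, hf, hfv, huniq⟩
    have ht1 : 1 ≤ treedepth G := le_trans (hf.1 v).1 (hf.1 v).2
    have hf2 : ∀ w : V, w ≠ v → 2 ≤ f w := by
      intro w hw
      have h1 := (hf.1 w).1
      rcases Nat.lt_or_ge (f w) 2 with h | h
      · exact absurd (huniq w (by omega)) hw
      · exact h
    have hrank : IsRanking (starClique G v) (treedepth G - 1) (fun x => f x.1 - 1) := by
      constructor
      · intro x
        have := hf2 x.1 x.2
        have := (hf.1 x.1).2
        dsimp only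
        omega
      · intro u w P hP hne heq
        obtain ⟨W, hW⟩ := lift_walk G v P
        have huw : u.1 ≠ w.1 := fun h => hne (Subtype.ext h)
        have hfuw : f u.1 = f w.1 := by
          have := hf2 u.1 u.2; have := hf2 w.1 w.2
          simp only at heq; omega
        obtain ⟨x, hx, hlt⟩ := hf.2 W.bypass W.bypass_isPath huw hfuw
        have hx' := W.support_bypass_subset hx
        rcases hW x hx' with rfl | ⟨y, hy, rfl⟩
        · have := hf2 u.1 u.2; omega
        · refine ⟨y, hy, ?_⟩
          have := hf2 u.1 u.2
          simp only
          omega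
    have : treedepth (starClique G v) ≤ treedepth G - 1 := Nat.sInf_le ⟨_, hrank⟩
    omega
  · intro hlt
    obtain ⟨g, hg'⟩ := Nat.sInf_mem (ranking_set_nonempty (starClique G v))
    have hg : IsRanking (starClique G v) (treedepth (starClique G v)) g := hg'
    set f : V → ℕ := fun x => if h : x = v then 1 else g ⟨x, h⟩ + 1 with hfdef
    have hfv : f v = 1 := by simp [hfdef]
    have hfw : ∀ (x : V) (h : x ≠ v), f x = g ⟨x, h⟩ + 1 := by
      intro x h; simp [hfdef, h]
    refine ⟨f, ⟨?_, ?_⟩, hfv, ?_⟩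
    · intro x
      by_cases h : x = v
      · subst h; rw [hfv]; omega
      · rw [hfw x h]
        have := (hg.1 ⟨x, h⟩).2
        omega
    · intro u w p hp hne heq
      have hu : u ≠ v := by
        intro huv
        have hw : w ≠ v := fun h => hne (huv.trans h.symm)
        rw [huv, hfv, hfw w hw] at heq
        have := (hg.1 ⟨w, hw⟩).1
        omega
      have hw : w ≠ v := by
        intro hwv
        rw [hwv, hfv, hfw u hu] at heq
        have := (hg.1 ⟨u, hu⟩).1
        omega
      obtain ⟨q, hq⟩ := project_walk G v p.length hu hw p le_rfl
      have hne' : (⟨u, hu⟩ : {x : V // x ≠ v}) ≠ ⟨w, hw⟩ :=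
        fun h => hne (congrArg Subtype.val h)
      have heq' : g ⟨u, hu⟩ = g ⟨w, hw⟩ := by
        rw [hfw u hu, hfw w hw] at heq; omega
      obtain ⟨y, hy, hlt'⟩ := hg.2 q.bypass q.bypass_isPath hne' heq'
      refine ⟨y.1, hq y (q.support_bypass_subset hy), ?_⟩
      have hfy : f y.1 = g y + 1 := hfw y.1 y.2
      rw [hfw u hu, hfy]
      omega
    · intro w hw1
      by_contra hwv
      rw [hfw w hwv] at hw1
      have := (hg.1 ⟨w, hwv⟩).1
      omega
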